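/- Let d_z, d_x be positive natural numbers, and let f, f̂ : (Fin d_z → ℝ) → (Fin d_x → ℝ) be continuously differentiable, injective maps whose derivative (fderiv) is injective at every point, and suppose both f and f̂ have single-parent structure. Let v : (Fin d_z → ℝ) → (Fin d_z → ℝ) be continuously differentiable with a continuously differentiable inverse, and suppose f ∘ v = f̂. Then there exists a permutation π of Fin d_z such that for every i, the i-th coordinate function of v depends only on coordinate π(i), i.e., for all z z' : Fin d_z → ℝ, z (π i) = z' (π i) implies (v z) i = (v z') i. -/

import Mathlib

/-- `g` depends only on the `k`-th coordinate of its input. -/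
def DependsOnlyOn {n : ℕ} (g : (Fin n → ℝ) → ℝ) (k : Fin n) : Prop :=
  ∀ z z' : Fin n → ℝ, z k = z' k → g z = g z'

/-- `f` has single-parent structure: each output coordinate depends on a single
input coordinate. -/
def SingleParent {m n : ℕ} (f : (Fin m → ℝ) → (Fin n → ℝ)) : Prop :=
  ∀ j : Fin n, ∃ k : Fin m, DependsOnlyOn (fun z => f z j) k

lemma fderiv_coord {m n : ℕ} (f : (Fin m → ℝ) → (Fin n → ℝ)) (hf : Differentiable ℝ f)
    (j : Fin n) (z : Fin m → ℝ) (u : Fin m → ℝ) :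
    fderiv ℝ (fun x => f x j) z u = fderiv ℝ f z u j := by
  have h : (fun x => f x j) = (ContinuousLinearMap.proj (R := ℝ) (φ := fun _ : Fin n => ℝ) j) ∘ f :=
    rfl
  rw [h, fderiv_comp z (ContinuousLinearMap.differentiableAt _) (hf z)]
  simp

lemma fderiv_dep_zero {n : ℕ} (g : (Fin n → ℝ) → ℝ) (k : Fin n)
    (hg : Differentiable ℝ g) (hdep : DependsOnlyOn g k)
    (z u : Fin n → ℝ) (hu : u k = 0) : fderiv ℝ g z u = 0 := by
  classical
  set S : ℝ →L[ℝ] (Fin n → ℝ) := (ContinuousLinearMap.id ℝ ℝ).smulRight (Pi.single k 1) with hS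
  set L : (Fin n → ℝ) →L[ℝ] ℝ := ContinuousLinearMap.proj k with hL
  have hSapp : ∀ t : ℝ, S t = Pi.single k t := by
    intro t; simp [hS]
    funext l
    by_cases h : l = k
    · subst h; simp
    · simp [Pi.single_eq_of_ne h]
  have hgeq : g = (g ∘ S) ∘ L := by
    funext x
    have : (Pi.single k (x k) : Fin n → ℝ) k = x k := by simp
    simp only [Function.comp_apply, hSapp]
    exact (hdep x (Pi.single k (x k)) this.symm)
  conv_lhs => rw [hgeq]
  rw [fderiv_comp z ((hg _).comp _ S.differentiableAt) L.differentiableAt]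
  rw [L.fderiv]
  simp only [ContinuousLinearMap.coe_comp', Function.comp_apply]
  have : L u = 0 := hu
  rw [this, map_zero]

lemma clm_sum {n : ℕ} (T : (Fin n → ℝ) →L[ℝ] (Fin n → ℝ)) (u : Fin n → ℝ) (i : Fin n) :
    T u i = ∑ l, u l * T (Pi.single l 1) i := by
  classical
  conv_lhs => rw [show u = ∑ l, u l • (Pi.single l 1 : Fin n → ℝ) by
    simp_rw [← Pi.single_smul, smul_eq_mul, mul_one]; exact (Finset.univ_sum_single u).symm]
  rw [map_sum]
  simp [Finset.sum_apply]

lemma const_of_partials {n : ℕ} (g : (Fin n → ℝ) → ℝ) (k : Fin n)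
    (hg : Differentiable ℝ g)
    (h : ∀ x u, u k = 0 → fderiv ℝ g x u = 0)
    (z z' : Fin n → ℝ) (hzz : z k = z' k) : g z = g z' := by
  set φ : ℝ → ℝ := fun t => g (z + t • (z' - z)) with hφ
  have hline : ∀ t : ℝ, HasDerivAt (fun s : ℝ => z + s • (z' - z)) (z' - z) t := by
    intro t
    simpa using ((hasDerivAt_id t).smul_const (z' - z)).const_add z
  have hd : ∀ t, HasDerivAt φ 0 t := by
    intro t
    have := (hg _).hasFDerivAt.comp_hasDerivAt t (hline t)
    have hz : fderiv ℝ g (z + t • (z' - z)) (z' - z) = 0 := by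
      apply h; simp [hzz]
    rwa [hz] at this
  have hconst : φ 0 = φ 1 :=
    is_const_of_deriv_eq_zero (fun t => (hd t).differentiableAt)
      (fun t => (hd t).deriv) 0 1
  simpa [hφ] using hconst

lemma fderiv_dep_eq {n : ℕ} (g : (Fin n → ℝ) → ℝ) (k : Fin n)
    (hg : Differentiable ℝ g) (hdep : DependsOnlyOn g k)
    (z u : Fin n → ℝ) :
    fderiv ℝ g z u = u k * fderiv ℝ g z (Pi.single k 1) := by
  have h0 := fderiv_dep_zero g k hg hdep z (u - u k • (Pi.single k 1 : Fin n → ℝ)) (by simp)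
  rw [map_sub, map_smul, sub_eq_zero] at h0
  simpa using h0

theorem stmt0 (d_z d_x : ℕ) (hdz : 0 < d_z) (hdx : 0 < d_x)
    (f fhat : (Fin d_z → ℝ) → (Fin d_x → ℝ))
    (hf : ContDiff ℝ 1 f) (hfinj : Function.Injective f)
    (hfderiv : ∀ z, Function.Injective (fderiv ℝ f z))
    (hfhat : ContDiff ℝ 1 fhat) (hfhatinj : Function.Injective fhat)
    (hfhatderiv : ∀ z, Function.Injective (fderiv ℝ fhat z))
    (hsp : SingleParent f) (hsphat : SingleParent fhat)
    (v w : (Fin d_z → ℝ) → (Fin d_z → ℝ))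
    (hv : ContDiff ℝ 1 v) (hw : ContDiff ℝ 1 w)
    (hwv : Function.LeftInverse w v) (hvw : Function.RightInverse w v)
    (hcomp : f ∘ v = fhat) :
    ∃ π : Equiv.Perm (Fin d_z),
      ∀ i : Fin d_z, ∀ z z' : Fin d_z → ℝ, z (π i) = z' (π i) → v z i = v z' i := by
  classical
  have hfd : Differentiable ℝ f := hf.differentiable one_ne_zero
  have hfhatd : Differentiable ℝ fhat := hfhat.differentiable one_ne_zero
  have hvd : Differentiable ℝ v := hv.differentiable one_ne_zero
  have hwd : Differentiable ℝ w := hw.differentiable one_ne_zero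
  choose kf hkf using hsp
  choose kh hkh using hsphat
  have hfjd : ∀ j : Fin d_x, Differentiable ℝ (fun x => f x j) := fun j =>
    differentiable_pi.mp hfd j
  have hvid : ∀ i : Fin d_z, Differentiable ℝ (fun x => v x i) := fun i =>
    differentiable_pi.mp hvd i
  -- the row function
  set row : Fin d_z → (Fin d_z → ℝ) → Fin d_z → ℝ :=
    fun i z l => fderiv ℝ v z (Pi.single l 1) i with hrow
  -- surjectivity of Dv
  have hDvsurj : ∀ z, Function.Surjective (fderiv ℝ v z) := by
    intro z
    have hid : v ∘ w = id := funext hvw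
    have hchain : (fderiv ℝ v (w (v z))).comp (fderiv ℝ w (v z)) = ContinuousLinearMap.id ℝ _ := by
      rw [← fderiv_comp (v z) (hvd _) (hwd _), hid]
      exact fderiv_id
    rw [hwv z] at hchain
    intro u
    refine ⟨fderiv ℝ w (v z) u, ?_⟩
    have := ContinuousLinearMap.ext_iff.mp hchain u
    simpa using this
  -- step B: each row is nonzero somewhere
  have hB : ∀ i z, ∃ l, row i z l ≠ 0 := by
    intro i z
    obtain ⟨u, hu⟩ := hDvsurj z (Pi.single i 1)
    by_contra h
    push_neg at h
    have h1 : fderiv ℝ v z u i = 0 := by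
      rw [clm_sum]
      exact Finset.sum_eq_zero fun l _ => by rw [show (fderiv ℝ v z) (Pi.single l 1) i = 0 from h l, mul_zero]
    rw [hu] at h1
    simp at h1
  -- step A: each row is supported on a single coordinate
  have hA : ∀ i z, ∃ kk, ∀ l, l ≠ kk → row i z l = 0 := by
    intro i z
    set y := v z with hy
    -- find output j with parent i and nonzero derivative at y
    have hcol : ∃ j, kf j = i ∧ fderiv ℝ (fun x => f x j) y (Pi.single i 1) ≠ 0 := by
      by_contra h
      push_neg at h
      have hz0 : fderiv ℝ f y (Pi.single i 1) = 0 := by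
        funext j
        rw [← fderiv_coord f hfd j]
        by_cases hji : kf j = i
        · exact h j hji
        · exact fderiv_dep_zero _ (kf j) (hfjd j) (hkf j) y _ (Pi.single_eq_of_ne hji 1)
      have := hfderiv y (by rw [hz0, map_zero] : fderiv ℝ f y (Pi.single i 1) = fderiv ℝ f y 0)
      have := congrFun this i
      simp at this
    obtain ⟨j, hji, hc⟩ := hcol
    refine ⟨kh j, fun l hl => ?_⟩
    -- fhat_j as composition
    have hfhatj : (fun x => fhat x j) = (fun x => f x j) ∘ v := by
      rw [← hcomp]; rfl
    -- LHS: derivative of fhat_j in direction single l 1 is 0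
    have hL : fderiv ℝ (fun x => fhat x j) z (Pi.single l 1) = 0 :=
      fderiv_dep_zero _ (kh j) (differentiable_pi.mp hfhatd j) (hkh j) z _
        (Pi.single_eq_of_ne (Ne.symm hl) 1)
    -- chain rule
    have hR : fderiv ℝ (fun x => fhat x j) z (Pi.single l 1)
        = fderiv ℝ (fun x => f x j) y (fderiv ℝ v z (Pi.single l 1)) := by
      rw [hfhatj, fderiv_comp z (hfjd j (v z)) (hvd z)]
      rfl
    have hdep : fderiv ℝ (fun x => f x j) y (fderiv ℝ v z (Pi.single l 1))
        = (fderiv ℝ v z (Pi.single l 1)) i * fderiv ℝ (fun x => f x j) y (Pi.single i 1) := by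
      have := fderiv_dep_eq (fun x => f x j) (kf j) (hfjd j) (hkf j) y
        (fderiv ℝ v z (Pi.single l 1))
      rwa [hji] at this
    rw [hR, hdep] at hL
    rcases mul_eq_zero.mp hL with h1 | h1
    · exact h1
    · exact absurd h1 hc
  -- define the parent map
  set P : Fin d_z → (Fin d_z → ℝ) → Fin d_z := fun i z => (hA i z).choose with hP
  have hPsupp : ∀ i z l, l ≠ P i z → row i z l = 0 := fun i z => (hA i z).choose_spec
  have hPne : ∀ i z, row i z (P i z) ≠ 0 := by
    intro i z h0
    obtain ⟨l, hl⟩ := hB i z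
    by_cases hlp : l = P i z
    · rw [hlp] at hl; exact hl h0
    · exact hl (hPsupp i z l hlp)
  -- continuity of rows
  have hrowcont : ∀ i l, Continuous (fun z => row i z l) := by
    intro i l
    have h1 : Continuous (fun z => fderiv ℝ v z) := (hv.continuous_fderiv one_ne_zero)
    have h2 : Continuous (fun z => fderiv ℝ v z (Pi.single l 1)) := by
      exact (ContinuousLinearMap.apply ℝ (Fin d_z → ℝ) (Pi.single l 1)).continuous.comp h1
    exact (continuous_apply i).comp h2
  -- local constancy of P i
  have hPlc : ∀ i, IsLocallyConstant (P i) := by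
    intro i
    rw [IsLocallyConstant.iff_exists_open]
    intro z
    refine ⟨{x | row i x (P i z) ≠ 0}, (isOpen_ne.preimage (hrowcont i (P i z))), hPne i z, ?_⟩
    intro x hx
    by_contra hne
    exact hx (hPsupp i x (P i z) fun h => hne h.symm)
  -- P i is constant
  have hPconst : ∀ i z, P i z = P i 0 := fun i z =>
    (hPlc i).apply_eq_of_preconnectedSpace z 0
  set π0 : Fin d_z → Fin d_z := fun i => P i 0 with hπ0
  have hsupp : ∀ i z l, l ≠ π0 i → row i z l = 0 := fun i z l hl =>
    hPsupp i z l (by rw [hPconst i z]; exact hl)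
  have hne0 : ∀ i z, row i z (π0 i) ≠ 0 := by
    intro i z
    have := hPne i z
    rwa [hPconst i z] at this
  -- expansion of Dv applied to u, at coordinate i
  have hexp : ∀ i (x u : Fin d_z → ℝ), fderiv ℝ v x u i = u (π0 i) * row i x (π0 i) := by
    intro i x u
    rw [clm_sum]
    rw [Finset.sum_eq_single (π0 i)]
    · intro l _ hl
      rw [show (fderiv ℝ v x) (Pi.single l 1) i = 0 from hsupp i x l hl, mul_zero]
    · intro h; exact absurd (Finset.mem_univ _) h
  -- injectivity
  have hinj : Function.Injective π0 := by
    intro i i' hii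
    by_contra hne
    obtain ⟨u, hu⟩ := hDvsurj 0 (Pi.single i 1)
    have h1 := hexp i 0 u
    have h2 := hexp i' 0 u
    rw [hu] at h1 h2
    simp only [Pi.single_eq_same] at h1
    rw [Pi.single_eq_of_ne (fun h => hne h.symm)] at h2
    have hu0 : u (π0 i) ≠ 0 := fun h0 => by rw [h0, zero_mul] at h1; exact one_ne_zero h1
    rw [← hii] at h2
    rcases mul_eq_zero.mp h2.symm with h | h
    · exact hu0 h
    · rw [hii] at h; exact hne0 i' 0 h
  have hbij : Function.Bijective π0 := Finite.injective_iff_bijective.mp hinj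
  refine ⟨Equiv.ofBijective π0 hbij, ?_⟩
  intro i z z' hz
  have hfd0 : ∀ (x u : Fin d_z → ℝ), u (π0 i) = 0 → fderiv ℝ (fun x => v x i) x u = 0 := by
    intro x u hu
    rw [fderiv_coord v hvd i, hexp i x u, hu, zero_mul]
  simp only [Equiv.ofBijective_apply] at hz
  exact const_of_partials (fun x => v x i) (π0 i) (hvid i) hfd0 z z' hz
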